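/- Let S = ⟨m, n_1, ..., n_{m-1}⟩ be a maximal embedding dimension numerical semigroup with m ≥ 3 prime. Then S is bland: LD(S) = 1/max Δ(S). Moreover, if am is the smallest Betti element divisible by m, then max Δ(S) = a - 2. -/

import Mathlib

open Finset

namespace LengthDensity

/-- The set of factorizations of `n` with respect to generators `g`. -/
def facs {k : ℕ} (g : Fin k → ℕ) (n : ℕ) : Set (Fin k → ℕ) :=
  {z | ∑ i, z i * g i = n}

/-- Membership in the numerical semigroup generated by `g`. -/
def mem {k : ℕ} (g : Fin k → ℕ) (n : ℕ) : Prop := (facs g n).Nonempty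

/-- The set of factorization lengths of `n`. -/
def lengthSet {k : ℕ} (g : Fin k → ℕ) (n : ℕ) : Set ℕ :=
  (fun z => ∑ i, z i) '' facs g n

/-- Length density of an element. -/
noncomputable def LD {k : ℕ} (g : Fin k → ℕ) (n : ℕ) : ℝ :=
  (((lengthSet g n).ncard : ℝ) - 1) /
    (((sSup (lengthSet g n) : ℕ) : ℝ) - ((sInf (lengthSet g n) : ℕ) : ℝ))

/-- Length density of the semigroup: infimum of `LD` over elements with
non-singleton length set. -/
noncomputable def LDsgp {k : ℕ} (g : Fin k → ℕ) : ℝ :=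
  sInf {x : ℝ | ∃ n : ℕ, 2 ≤ (lengthSet g n).ncard ∧ x = LD g n}

/-- The delta set (successive gaps) of a set of naturals. -/
def deltaOf (L : Set ℕ) : Set ℕ :=
  {d | ∃ a ∈ L, ∃ b ∈ L, a < b ∧ (∀ c ∈ L, ¬(a < c ∧ c < b)) ∧ d = b - a}

/-- The delta set of an element. -/
def delta {k : ℕ} (g : Fin k → ℕ) (n : ℕ) : Set ℕ := deltaOf (lengthSet g n)

/-- The delta set of the semigroup. -/
def Delta {k : ℕ} (g : Fin k → ℕ) : Set ℕ := ⋃ n : ℕ, delta g n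

/-- Adjacency in the factorization graph of `n`: two factorizations of `n`
sharing a positive coordinate. -/
def adj {k : ℕ} (g : Fin k → ℕ) (n : ℕ) (z z' : Fin k → ℕ) : Prop :=
  z ∈ facs g n ∧ z' ∈ facs g n ∧ ∃ i, 0 < z i ∧ 0 < z' i

/-- `n` is a Betti element: its factorization graph is disconnected. -/
def IsBetti {k : ℕ} (g : Fin k → ℕ) (n : ℕ) : Prop :=
  ∃ z ∈ facs g n, ∃ z' ∈ facs g n, ¬ Relation.ReflTransGen (adj g n) z z'

/-- The semigroup is tasty: `LD(S) > 1 / max Δ(S)`. -/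
def Tasty {k : ℕ} (g : Fin k → ℕ) : Prop := LDsgp g > 1 / ((sSup (Delta g) : ℕ) : ℝ)

/-- The semigroup is bland: `LD(S) = 1 / max Δ(S)`. -/
def Bland {k : ℕ} (g : Fin k → ℕ) : Prop := LDsgp g = 1 / ((sSup (Delta g) : ℕ) : ℝ)

/-- `g` is a minimal generating set: no generator is a nonnegative integer
combination of the others. -/
def IsMinGen {k : ℕ} (g : Fin k → ℕ) : Prop :=
  ∀ i, ¬ ∃ z : Fin k → ℕ, z i = 0 ∧ ∑ j, z j * g j = g i

/-- `n` is a non-atom of the semigroup generated by `g`: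
it is a sum of two nonzero elements. -/
def NonAtom {k : ℕ} (g : Fin k → ℕ) (n : ℕ) : Prop :=
  ∃ a b : ℕ, 0 < a ∧ 0 < b ∧ mem g a ∧ mem g b ∧ n = a + b



section Aux

variable {m : ℕ}

/-- auxiliary: the vector supported at `i` with value `k`. -/
def sing (i : Fin m) (k : ℕ) : Fin m → ℕ := fun j => if j = i then k else 0

def vval (g z : Fin m → ℕ) : ℕ := ∑ j, z j * g j

def len (z : Fin m → ℕ) : ℕ := ∑ j, z j

lemma vval_add (g z w : Fin m → ℕ) : vval g (z + w) = vval g z + vval g w := by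
  simp [vval, add_mul, Finset.sum_add_distrib]

lemma len_add (z w : Fin m → ℕ) : len (z + w) = len z + len w := by
  simp [len, Finset.sum_add_distrib]

lemma vval_sing (g : Fin m → ℕ) (i : Fin m) (k : ℕ) : vval g (sing i k) = k * g i := by
  simp [vval, sing, ite_mul]

lemma len_sing (i : Fin m) (k : ℕ) : len (sing i k) = k := by
  simp [len, sing]

lemma exists_pos_of_len_pos {z : Fin m → ℕ} (h : 0 < len z) : ∃ i, 0 < z i := by
  by_contra hc
  push_neg at hc
  have : len z = 0 := Finset.sum_eq_zero fun j _ => by have := hc j; omega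
  omega

lemma zero_of_len_zero {z : Fin m → ℕ} (h : len z = 0) (j : Fin m) : z j = 0 := by
  have := Finset.sum_eq_zero_iff.mp h
  exact this j (Finset.mem_univ j)

lemma exists_decomp {z : Fin m → ℕ} {i : Fin m} (h : 0 < z i) :
    ∃ w, z = sing i 1 + w ∧ w i = z i - 1 ∧ ∀ j, j ≠ i → w j = z j := by
  refine ⟨fun j => if j = i then z i - 1 else z j, ?_, by simp, fun j hj => by simp [hj]⟩
  funext j
  by_cases hj : j = i <;> simp [sing, hj, Pi.add_apply] <;> omega

def F0 (hm : 3 ≤ m) : Fin m := ⟨0, Nat.lt_of_lt_of_le (Nat.zero_lt_succ 2) hm⟩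

def iot (hm : 3 ≤ m) (ρ : ZMod m) : Fin m :=
  ⟨(ZMod.val ρ), by haveI : NeZero m := ⟨by omega⟩; exact ZMod.val_lt ρ⟩

def pii (j : Fin m) : ZMod m := (j.val : ZMod m)

lemma iot_pii (hm : 3 ≤ m) (j : Fin m) : iot hm (pii j) = j := by
  haveI : NeZero m := ⟨by omega⟩
  apply Fin.ext
  simp [iot, pii, ZMod.val_natCast, Nat.mod_eq_of_lt j.isLt]

lemma pii_iot (hm : 3 ≤ m) (ρ : ZMod m) : pii (iot hm ρ) = ρ := by
  haveI : NeZero m := ⟨by omega⟩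
  simp [iot, pii, ZMod.natCast_val, ZMod.cast_id]

lemma pii_inj (hm : 3 ≤ m) {j j' : Fin m} (h : pii j = pii j') : j = j' := by
  have := congrArg (iot hm) h
  rwa [iot_pii, iot_pii] at this

lemma iot_inj (hm : 3 ≤ m) {ρ σ : ZMod m} (h : iot hm ρ = iot hm σ) : ρ = σ := by
  have := congrArg pii h
  rwa [pii_iot, pii_iot] at this

lemma pii_F0 (hm : 3 ≤ m) : pii (F0 hm) = 0 := by simp [pii, F0]

lemma iot_zero (hm : 3 ≤ m) : iot hm 0 = F0 hm := by
  have := iot_pii hm (F0 hm); rwa [pii_F0] at this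

lemma pii_eq_zero_iff (hm : 3 ≤ m) (j : Fin m) : pii j = 0 ↔ j = F0 hm := by
  constructor
  · intro h; have := congrArg (iot hm) h; rwa [iot_pii, iot_zero] at this
  · intro h; rw [h]; exact pii_F0 hm

lemma val_pii (hm : 3 ≤ m) (j : Fin m) : (pii j).val = j.val := by
  haveI : NeZero m := ⟨by omega⟩
  simp [pii, ZMod.val_natCast, Nat.mod_eq_of_lt j.isLt]

/-- the generators indexed by residues -/
def GG (hm : 3 ≤ m) (g : Fin m → ℕ) (ρ : ZMod m) : ℕ := g (iot hm ρ)

lemma GG_pii (hm : 3 ≤ m) (g : Fin m → ℕ) (j : Fin m) : GG hm g (pii j) = g j := by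
  rw [GG, iot_pii]

lemma gcast (hm : 3 ≤ m) (g : Fin m → ℕ) (hmod : ∀ i : Fin m, g i % m = (i : ℕ))
    (j : Fin m) : ((g j : ℕ) : ZMod m) = pii j := by
  conv_lhs => rw [← Nat.mod_add_div (g j) m, hmod j]
  push_cast [ZMod.natCast_self]
  simp [pii]

lemma Gcast (hm : 3 ≤ m) (g : Fin m → ℕ) (hmod : ∀ i : Fin m, g i % m = (i : ℕ))
    (ρ : ZMod m) : ((GG hm g ρ : ℕ) : ZMod m) = ρ := by
  rw [GG, gcast hm g hmod, pii_iot]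

lemma GG0 (hm : 3 ≤ m) (g : Fin m → ℕ) (hg0 : g ⟨0, Nat.lt_of_lt_of_le (Nat.zero_lt_succ 2) hm⟩ = m) : GG hm g 0 = m := by
  rw [GG, iot_zero]; exact hg0

lemma GG_big (hm : 3 ≤ m) (g : Fin m → ℕ) (hbig : ∀ i : Fin m, (i : ℕ) ≠ 0 → m < g i)
    {ρ : ZMod m} (hρ : ρ ≠ 0) : m < GG hm g ρ := by
  haveI : NeZero m := ⟨by omega⟩
  apply hbig
  simp only [iot]
  intro h
  exact hρ (by rwa [ZMod.val_eq_zero] at h)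

end Aux


section Aux2


variable {m : ℕ}

/-- Key trading lemma from minimality of the generating set. -/
lemma lemT (hm : 3 ≤ m) (g : Fin m → ℕ) (hg0 : g ⟨0, Nat.lt_of_lt_of_le (Nat.zero_lt_succ 2) hm⟩ = m)
    (hmod : ∀ i : Fin m, g i % m = (i : ℕ)) (hmin : IsMinGen g)
    {ρ σ : ZMod m} (hρ : ρ ≠ 0) (hσ : σ ≠ 0) (hρσ : ρ + σ ≠ 0) :
    ∃ t, 1 ≤ t ∧ GG hm g ρ + GG hm g σ = GG hm g (ρ + σ) + t * m := by
  haveI : NeZero m := ⟨by omega⟩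
  have hgF0 : g (F0 hm) = m := hg0
  have hmeq : (GG hm g ρ + GG hm g σ) % m = (GG hm g (ρ + σ)) % m := by
    apply (ZMod.natCast_eq_natCast_iff _ _ m).mp
    push_cast
    rw [Gcast hm g hmod, Gcast hm g hmod, Gcast hm g hmod]
  have key : ∀ l : ℕ, GG hm g ρ + GG hm g σ + l * m ≠ GG hm g (ρ + σ) := by
    intro l hl
    apply hmin (iot hm (ρ + σ))
    have h1 : iot hm (ρ + σ) ≠ iot hm ρ := fun h => hσ (by
      have h' := iot_inj hm h
      exact add_eq_left.mp h')
    have h2 : iot hm (ρ + σ) ≠ iot hm σ := fun h => hρ (by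
      have h' := iot_inj hm h
      exact add_eq_right.mp h')
    have h3 : iot hm (ρ + σ) ≠ F0 hm := by
      rw [← iot_zero hm]
      exact fun h => hρσ (iot_inj hm h)
    refine ⟨sing (iot hm ρ) 1 + (sing (iot hm σ) 1 + sing (F0 hm) l), ?_, ?_⟩
    · simp [sing, Pi.add_apply, h1, h2, h3]
    · show vval g _ = _
      rw [vval_add, vval_add, vval_sing, vval_sing, vval_sing, one_mul, one_mul, hgF0]
      show GG hm g ρ + (GG hm g σ + l * m) = GG hm g (ρ + σ)
      omega
  by_cases hle : GG hm g ρ + GG hm g σ ≤ GG hm g (ρ + σ)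
  · exfalso
    have hdvd : m ∣ GG hm g (ρ + σ) - (GG hm g ρ + GG hm g σ) :=
      (Nat.modEq_iff_dvd' hle).mp hmeq
    obtain ⟨l, hl⟩ := hdvd
    have : GG hm g (ρ + σ) = m * l + (GG hm g ρ + GG hm g σ) :=
      ((Nat.sub_eq_iff_eq_add hle).mp hl)
    exact key l (by rw [this]; ring)
  · push_neg at hle
    have hdvd : m ∣ GG hm g ρ + GG hm g σ - GG hm g (ρ + σ) :=
      (Nat.modEq_iff_dvd' (le_of_lt hle)).mp hmeq.symm
    obtain ⟨t, ht⟩ := hdvd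
    have heq : GG hm g ρ + GG hm g σ = m * t + GG hm g (ρ + σ) :=
      (Nat.sub_eq_iff_eq_add (le_of_lt hle)).mp ht
    have ht1 : 1 ≤ t := by
      rcases Nat.eq_zero_or_pos t with h | h
      · exfalso; apply key 0; rw [heq, h]; ring
      · exact h
    exact ⟨t, ht1, by rw [heq]; ring⟩

lemma pair_mul (hm : 3 ≤ m) (g : Fin m → ℕ)
    (hmod : ∀ i : Fin m, g i % m = (i : ℕ)) (hbig : ∀ i : Fin m, (i : ℕ) ≠ 0 → m < g i)
    {ρ : ZMod m} (hρ : ρ ≠ 0) :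
    ∃ c, 3 ≤ c ∧ GG hm g ρ + GG hm g (-ρ) = c * m := by
  haveI : NeZero m := ⟨by omega⟩
  have hdvd : m ∣ GG hm g ρ + GG hm g (-ρ) := by
    have : (((GG hm g ρ + GG hm g (-ρ) : ℕ)) : ZMod m) = 0 := by
      push_cast
      rw [Gcast hm g hmod, Gcast hm g hmod]
      ring
    exact (ZMod.natCast_eq_zero_iff _ _).mp this
  obtain ⟨c, hc⟩ := hdvd
  refine ⟨c, ?_, by rw [hc]; ring⟩
  have h1 : m < GG hm g ρ := GG_big hm g hbig hρ
  have h2 : m < GG hm g (-ρ) := GG_big hm g hbig (neg_ne_zero.mpr hρ)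
  by_contra hc3
  push_neg at hc3
  have : m * c ≤ m * 2 := Nat.mul_le_mul_left m (by omega)
  omega

lemma exists_minpair (hm : 3 ≤ m) (g : Fin m → ℕ)
    (hmod : ∀ i : Fin m, g i % m = (i : ℕ)) (hbig : ∀ i : Fin m, (i : ℕ) ≠ 0 → m < g i) :
    ∃ (a' : ℕ) (i : ZMod m), i ≠ 0 ∧ 3 ≤ a' ∧ GG hm g i + GG hm g (-i) = a' * m ∧
      ∀ ρ : ZMod m, ρ ≠ 0 → a' * m ≤ GG hm g ρ + GG hm g (-ρ) := by
  haveI : NeZero m := ⟨by omega⟩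
  haveI : Fact (1 < m) := ⟨by omega⟩
  have hne : (Finset.univ.erase (0 : ZMod m)).Nonempty :=
    ⟨1, Finset.mem_erase.mpr ⟨one_ne_zero, Finset.mem_univ _⟩⟩
  obtain ⟨i, hi, hmin'⟩ :=
    Finset.exists_min_image (Finset.univ.erase (0 : ZMod m))
      (fun ρ => GG hm g ρ + GG hm g (-ρ)) hne
  have hi0 : i ≠ 0 := (Finset.mem_erase.mp hi).1
  obtain ⟨c, hc3, hc⟩ := pair_mul hm g hmod hbig hi0
  refine ⟨c, i, hi0, hc3, hc, fun ρ hρ => ?_⟩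
  rw [← hc]
  exact hmin' ρ (Finset.mem_erase.mpr ⟨hρ, Finset.mem_univ _⟩)

end Aux2


end LengthDensity

namespace LengthDensity

section Aux3

variable {m : ℕ}

lemma double_ne_zero (hm : 3 ≤ m) (hp : Nat.Prime m) {j : Fin m} (hj : j ≠ F0 hm) :
    pii j + pii j ≠ 0 := by
  haveI : NeZero m := ⟨by omega⟩
  intro h
  have hcast : ((2 * j.val : ℕ) : ZMod m) = 0 := by
    push_cast
    rw [two_mul]
    simpa [pii] using h
  have hdvd : m ∣ 2 * j.val := (ZMod.natCast_eq_zero_iff _ _).mp hcast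
  rcases (Nat.Prime.dvd_mul hp).mp hdvd with h2 | hj'
  · have := Nat.le_of_dvd (by norm_num) h2; omega
  · exact hj (Fin.ext (Nat.eq_zero_of_dvd_of_lt hj' j.isLt))

lemma decomp_one (hm : 3 ≤ m) {z : Fin m → ℕ} (hz0 : z (F0 hm) = 0) (h : 0 < len z) :
    ∃ p w, p ≠ F0 hm ∧ w (F0 hm) = 0 ∧ z = sing p 1 + w ∧ len z = len w + 1 ∧
      w p = z p - 1 ∧ (∀ j, j ≠ p → w j = z j) := by
  obtain ⟨p, hp⟩ := exists_pos_of_len_pos h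
  have hpF0 : p ≠ F0 hm := fun h' => by rw [h', hz0] at hp; exact absurd hp (by omega)
  obtain ⟨w, hzw, hwp, hwj⟩ := exists_decomp hp
  have hwF0 : w (F0 hm) = 0 := by rw [hwj _ (fun h' => hpF0 h'.symm)]; exact hz0
  have hlen : len z = len w + 1 := by rw [hzw, len_add, len_sing]; omega
  exact ⟨p, w, hpF0, hwF0, hzw, hlen, hwp, hwj⟩

lemma sublemZ (hm : 3 ≤ m) (hp : Nat.Prime m) {z : Fin m → ℕ} (hz0 : z (F0 hm) = 0)
    (h3 : 3 ≤ len z) :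
    ∃ p q w, z = sing p 1 + (sing q 1 + w) ∧ p ≠ F0 hm ∧ q ≠ F0 hm ∧ pii p + pii q ≠ 0 := by
  by_cases hA : ∃ j, j ≠ F0 hm ∧ 2 ≤ z j
  · obtain ⟨j, hjF, hj2⟩ := hA
    obtain ⟨w, hzw, hwj, _⟩ := exists_decomp (show 0 < z j by omega)
    obtain ⟨w', hww', _, _⟩ := exists_decomp (show 0 < w j by omega)
    exact ⟨j, j, w', by rw [hzw, hww'], hjF, hjF, double_ne_zero hm hp hjF⟩
  · push_neg at hA
    obtain ⟨j₁, w, hj₁F, hwF, hzw, hlen1, hwj₁, hwother⟩ := decomp_one hm hz0 (by omega)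
    have hzj₁ : z j₁ ≤ 1 := by have := hA j₁ hj₁F; omega
    have hwj₁0 : w j₁ = 0 := by omega
    obtain ⟨j₂, w', hj₂F, hw'F, hww', hlen2, hw'j₂, hw'other⟩ :=
      decomp_one hm hwF (by omega)
    have hwj₂pos : 0 < w j₂ := by
      have := congrFun hww' j₂; simp [sing, Pi.add_apply] at this; omega
    have hj₂j₁ : j₂ ≠ j₁ := fun h => by rw [h, hwj₁0] at hwj₂pos; omega
    have hwj₂ : w j₂ ≤ 1 := by
      have := hA j₂ hj₂F; have := hwother j₂ hj₂j₁; omega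
    have hw'j₂0 : w' j₂ = 0 := by omega
    obtain ⟨j₃, w'', hj₃F, hw''F, hw'w'', hlen3, hw''j₃, hw''other⟩ :=
      decomp_one hm hw'F (by omega)
    have hw'j₃pos : 0 < w' j₃ := by
      have := congrFun hw'w'' j₃; simp [sing, Pi.add_apply] at this; omega
    have hj₃j₂ : j₃ ≠ j₂ := fun h => by rw [h, hw'j₂0] at hw'j₃pos; omega
    by_cases h12 : pii j₁ + pii j₂ = 0
    · have h13 : pii j₁ + pii j₃ ≠ 0 := by
        intro h13
        exact hj₃j₂ (pii_inj hm (by linear_combination h13 - h12))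
      refine ⟨j₁, j₃, sing j₂ 1 + w'', ?_, hj₁F, hj₃F, h13⟩
      rw [hzw, hww', hw'w'']
      congr 1
      exact add_left_comm _ _ _
    · exact ⟨j₁, j₂, w', by rw [hzw, hww'], hj₁F, hj₂F, h12⟩

lemma vval_zero (g : Fin m → ℕ) {w : Fin m → ℕ} (hw : len w = 0) : vval g w = 0 :=
  Finset.sum_eq_zero fun j _ => by rw [zero_of_len_zero hw j, zero_mul]

/-- Zero-sum multisets of nonzero generators have value at least `a' * m`. -/
lemma valueLemma (hm : 3 ≤ m) (hp : Nat.Prime m) (g : Fin m → ℕ)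
    (hg0 : g ⟨0, Nat.lt_of_lt_of_le (Nat.zero_lt_succ 2) hm⟩ = m)
    (hmod : ∀ i : Fin m, g i % m = (i : ℕ)) (hmin : IsMinGen g)
    (a' : ℕ) (hpair : ∀ ρ : ZMod m, ρ ≠ 0 → a' * m ≤ GG hm g ρ + GG hm g (-ρ)) :
    ∀ L (z : Fin m → ℕ), len z = L → z (F0 hm) = 0 → 1 ≤ len z → m ∣ vval g z →
      a' * m ≤ vval g z ∧ len z ≠ 1 ∧ (3 ≤ len z → a' * m + m ≤ vval g z) := by
  haveI : NeZero m := ⟨by omega⟩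
  intro L
  induction L using Nat.strong_induction_on with
  | _ L IH =>
    intro z hzL hz0 hlen hdvd
    rcases show len z = 1 ∨ len z = 2 ∨ 3 ≤ len z by omega with h1 | h2 | h3
    · -- impossible
      exfalso
      obtain ⟨p, w, hpF, hwF, hzw, hlenw, _, _⟩ := decomp_one hm hz0 (by omega)
      have hw0 : len w = 0 := by omega
      have hval : vval g z = g p := by
        rw [hzw, vval_add, vval_sing, one_mul, vval_zero g hw0]; ring
      obtain ⟨k, hk⟩ := hdvd
      have hmod0 : g p % m = 0 := by rw [← hval, hk]; exact Nat.mul_mod_right m k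
      have := hmod p
      have hpv : (p : ℕ) = 0 := by omega
      exact hpF (Fin.ext hpv)
    · -- length two: a pair
      obtain ⟨p, w, hpF, hwF, hzw, hlenw, _, _⟩ := decomp_one hm hz0 (by omega)
      obtain ⟨q, w', hqF, hw'F, hww', hlenw', _, _⟩ := decomp_one hm hwF (by omega)
      have hw'0 : len w' = 0 := by omega
      have hval : vval g z = g p + g q := by
        rw [hzw, hww', vval_add, vval_add, vval_sing, vval_sing, one_mul, one_mul,
          vval_zero g hw'0]
        omega
      have hsum0 : pii p + pii q = 0 := by
        have : ((vval g z : ℕ) : ZMod m) = 0 := by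
          obtain ⟨k, hk⟩ := hdvd
          rw [hk]; push_cast; simp [ZMod.natCast_self]
        rw [hval] at this
        push_cast at this
        rwa [gcast hm g hmod, gcast hm g hmod] at this
      have hq : pii q = -pii p := by linear_combination hsum0
      have hppos : pii p ≠ 0 := fun h => hpF ((pii_eq_zero_iff hm p).mp h)
      have : a' * m ≤ GG hm g (pii p) + GG hm g (-pii p) := hpair _ hppos
      rw [GG_pii, ← hq, GG_pii] at this
      rw [hval]
      exact ⟨this, by omega, by omega⟩
    · -- length at least three: merge
      obtain ⟨p, q, w, hzw, hpF, hqF, hpq⟩ := sublemZ hm hp hz0 h3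
      have hppos : pii p ≠ 0 := fun h => hpF ((pii_eq_zero_iff hm p).mp h)
      have hqpos : pii q ≠ 0 := fun h => hqF ((pii_eq_zero_iff hm q).mp h)
      obtain ⟨t, ht1, htEq⟩ := lemT hm g hg0 hmod hmin hppos hqpos hpq
      rw [GG_pii, GG_pii] at htEq
      set r := iot hm (pii p + pii q) with hr
      have hrF : r ≠ F0 hm := by
        rw [hr, ← iot_zero hm]
        exact fun h => hpq (iot_inj hm h)
      set z' := sing r 1 + w with hz'
      have hwF : w (F0 hm) = 0 := by
        have := congrFun hzw (F0 hm)
        simp [sing, Pi.add_apply, Ne.symm hpF, Ne.symm hqF] at this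
        omega
      have hz'F : z' (F0 hm) = 0 := by
        simp [hz', sing, Pi.add_apply, Ne.symm hrF, hwF]
      have hlenz : len z = len w + 2 := by
        rw [hzw, len_add, len_add, len_sing, len_sing]; omega
      have hlenz' : len z' = len w + 1 := by
        rw [hz', len_add, len_sing]; omega
      have hvalz : vval g z = vval g z' + t * m := by
        rw [hzw, hz', vval_add, vval_add, vval_add, vval_sing, vval_sing, vval_sing,
          one_mul, one_mul, one_mul]
        have : g r = GG hm g (pii p + pii q) := rfl
        omega
      have hdvd' : m ∣ vval g z' := by
        have h1 : m ∣ t * m := Dvd.intro t (mul_comm m t)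
        rw [hvalz, add_comm] at hdvd
        exact (Nat.dvd_add_right h1).mp hdvd
      obtain ⟨hge, _, _⟩ := IH (len z') (by omega) z' rfl hz'F (by omega) hdvd'
      have hmt : m ≤ t * m := Nat.le_mul_of_pos_left m (by omega)
      exact ⟨by omega, by omega, fun _ => by omega⟩

end Aux3

end LengthDensity

namespace LengthDensity

section Aux4

variable {m : ℕ}

lemma strip_decomp (hm : 3 ≤ m) (g : Fin m → ℕ) (hg0 : g ⟨0, Nat.lt_of_lt_of_le (Nat.zero_lt_succ 2) hm⟩ = m)
    (z : Fin m → ℕ) :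
    ∃ rest, rest (F0 hm) = 0 ∧ z = sing (F0 hm) (z (F0 hm)) + rest ∧
      vval g z = z (F0 hm) * m + vval g rest ∧ len z = z (F0 hm) + len rest := by
  have hgF0 : g (F0 hm) = m := hg0
  set rest : Fin m → ℕ := fun j => if j = F0 hm then 0 else z j with hrest
  have hrF : rest (F0 hm) = 0 := by simp [hrest]
  have hze : z = sing (F0 hm) (z (F0 hm)) + rest := by
    funext j
    by_cases hj : j = F0 hm <;> simp [sing, hrest, hj]
  have hval : vval g z = z (F0 hm) * m + vval g rest := by
    conv_lhs => rw [hze]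
    rw [vval_add, vval_sing, hgF0]
  have hlen : len z = z (F0 hm) + len rest := by
    conv_lhs => rw [hze]
    rw [len_add, len_sing]
  exact ⟨rest, hrF, hze, hval, hlen⟩

lemma facs_small (hm : 3 ≤ m) (hp : Nat.Prime m) (g : Fin m → ℕ)
    (hg0 : g ⟨0, Nat.lt_of_lt_of_le (Nat.zero_lt_succ 2) hm⟩ = m)
    (hmod : ∀ i : Fin m, g i % m = (i : ℕ)) (hmin : IsMinGen g)
    (a' : ℕ) (hpair : ∀ ρ : ZMod m, ρ ≠ 0 → a' * m ≤ GG hm g ρ + GG hm g (-ρ))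
    {n : ℕ} (hdvd : m ∣ n) (hlt : n < a' * m)
    {z : Fin m → ℕ} (hz : vval g z = n) : z = sing (F0 hm) (n / m) := by
  obtain ⟨rest, hrF, hze, hval, hlen⟩ := strip_decomp hm g hg0 z
  rcases Nat.eq_zero_or_pos (len rest) with h0 | hpos
  · have hv0 : vval g rest = 0 := vval_zero g h0
    have hzF : z (F0 hm) * m = n := by omega
    have hnm : n / m = z (F0 hm) := by
      rw [← hzF]; exact Nat.mul_div_cancel _ (by omega)
    rw [hnm]
    funext j
    have := congrFun hze j
    rw [this, Pi.add_apply, zero_of_len_zero h0 j, add_zero]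
  · exfalso
    have hdr : m ∣ vval g rest := by
      have h1 : m ∣ z (F0 hm) * m := Dvd.intro _ (mul_comm m _)
      have hdvd2 : m ∣ z (F0 hm) * m + vval g rest := by rw [← hval, hz]; exact hdvd
      exact (Nat.dvd_add_right h1).mp hdvd2
    obtain ⟨hge, _, _⟩ := valueLemma hm hp g hg0 hmod hmin a' hpair (len rest) rest rfl
      hrF hpos hdr
    omega

lemma facs_amul (hm : 3 ≤ m) (hp : Nat.Prime m) (g : Fin m → ℕ)
    (hg0 : g ⟨0, Nat.lt_of_lt_of_le (Nat.zero_lt_succ 2) hm⟩ = m)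
    (hmod : ∀ i : Fin m, g i % m = (i : ℕ)) (hmin : IsMinGen g)
    (a' : ℕ) (hpair : ∀ ρ : ZMod m, ρ ≠ 0 → a' * m ≤ GG hm g ρ + GG hm g (-ρ))
    {z : Fin m → ℕ} (hz : vval g z = a' * m) :
    (z = sing (F0 hm) a' ∧ len z = a') ∨ (z (F0 hm) = 0 ∧ len z = 2) := by
  obtain ⟨rest, hrF, hze, hval, hlen⟩ := strip_decomp hm g hg0 z
  rcases Nat.eq_zero_or_pos (len rest) with h0 | hpos
  · left
    have hv0 : vval g rest = 0 := vval_zero g h0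
    have hzF : z (F0 hm) * m = a' * m := by omega
    have hza : z (F0 hm) = a' := Nat.eq_of_mul_eq_mul_right (by omega) hzF
    constructor
    · funext j
      have := congrFun hze j
      rw [this, Pi.add_apply, zero_of_len_zero h0 j, hza, add_zero]
    · omega
  · right
    have hdr : m ∣ vval g rest := by
      have h1 : m ∣ z (F0 hm) * m := Dvd.intro _ (mul_comm m _)
      have hdvd : m ∣ vval g z := by rw [hz]; exact Dvd.intro _ (mul_comm m _)
      rw [hval] at hdvd
      exact (Nat.dvd_add_right h1).mp hdvd
    obtain ⟨hge, hne1, h3big⟩ := valueLemma hm hp g hg0 hmod hmin a' hpair (len rest) rest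
      rfl hrF hpos hdr
    have hzF0 : z (F0 hm) = 0 := by
      rcases Nat.eq_zero_or_pos (z (F0 hm)) with h | h
      · exact h
      · exfalso
        have : m ≤ z (F0 hm) * m := Nat.le_mul_of_pos_left m h
        omega
    have hlr : len rest = 2 := by
      by_contra hne2
      have h3 : 3 ≤ len rest := by omega
      have := h3big h3
      omega
    exact ⟨hzF0, by omega⟩

lemma betti_part (hm : 3 ≤ m) (hp : Nat.Prime m) (g : Fin m → ℕ)
    (hg0 : g ⟨0, Nat.lt_of_lt_of_le (Nat.zero_lt_succ 2) hm⟩ = m)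
    (hmod : ∀ i : Fin m, g i % m = (i : ℕ)) (hmin : IsMinGen g)
    (a' : ℕ) (i : ZMod m) (hi0 : i ≠ 0) (ha3 : 3 ≤ a')
    (hieq : GG hm g i + GG hm g (-i) = a' * m)
    (hpair : ∀ ρ : ZMod m, ρ ≠ 0 → a' * m ≤ GG hm g ρ + GG hm g (-ρ)) :
    IsBetti g (a' * m) ∧ lengthSet g (a' * m) = {2, a'} := by
  haveI : NeZero m := ⟨by omega⟩
  set zp : Fin m → ℕ := sing (iot hm i) 1 + sing (iot hm (-i)) 1 with hzp
  set zpow : Fin m → ℕ := sing (F0 hm) a' with hzpow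
  have hvzp : vval g zp = a' * m := by
    rw [hzp, vval_add, vval_sing, vval_sing, one_mul, one_mul, ← hieq]; rfl
  have hlzp : len zp = 2 := by rw [hzp, len_add, len_sing, len_sing]
  have hzpF : zp (F0 hm) = 0 := by
    have h1 : iot hm i ≠ F0 hm := by
      rw [← iot_zero hm]; exact fun h => hi0 (iot_inj hm h)
    have h2 : iot hm (-i) ≠ F0 hm := by
      rw [← iot_zero hm]; exact fun h => hi0 (neg_eq_zero.mp (iot_inj hm h))
    simp [hzp, sing, Pi.add_apply, Ne.symm h1, Ne.symm h2]
  have hvzpow : vval g zpow = a' * m := by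
    have hgF0 : g (F0 hm) = m := hg0
    rw [hzpow, vval_sing, hgF0]
  have hlzpow : len zpow = a' := len_sing _ _
  have hmemp : zp ∈ facs g (a' * m) := hvzp
  have hmempow : zpow ∈ facs g (a' * m) := hvzpow
  have inv : ∀ w, Relation.ReflTransGen (adj g (a' * m)) zp w → w (F0 hm) = 0 := by
    intro w hw
    induction hw with
    | refl => exact hzpF
    | tail hab hr ih =>
      obtain ⟨hbf, hcf, j, hbj, hcj⟩ := hr
      have hcval : vval g _ = a' * m := hcf
      rcases facs_amul hm hp g hg0 hmod hmin a' hpair hcval with ⟨hcs, _⟩ | ⟨hc0, _⟩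
      · exfalso
        have hjF : j ≠ F0 hm := fun h => by rw [h, ih] at hbj; omega
        rw [hcs] at hcj
        simp [sing, hjF] at hcj
      · exact hc0
  have hnot : ¬ Relation.ReflTransGen (adj g (a' * m)) zp zpow := by
    intro h
    have := inv _ h
    rw [hzpow] at this
    simp [sing] at this
    omega
  refine ⟨⟨zp, hmemp, zpow, hmempow, hnot⟩, ?_⟩
  ext lam
  simp only [Set.mem_insert_iff, Set.mem_singleton_iff]
  constructor
  · rintro ⟨z, hzf, hlz⟩
    have hlz' : len z = lam := hlz
    have hzval : vval g z = a' * m := hzf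
    rcases facs_amul hm hp g hg0 hmod hmin a' hpair hzval with ⟨_, hl⟩ | ⟨_, hl⟩
    · right; clear hlz hzf; omega
    · left; clear hlz hzf; omega
  · rintro (h | h)
    · refine ⟨zp, hmemp, ?_⟩
      show len zp = lam
      omega
    · refine ⟨zpow, hmempow, ?_⟩
      show len zpow = lam
      omega

end Aux4

end LengthDensity

namespace LengthDensity

section Aux5

variable {m : ℕ}

lemma walk (hm : 3 ≤ m) (hp : Nat.Prime m) (g : Fin m → ℕ)
    (hg0 : g ⟨0, Nat.lt_of_lt_of_le (Nat.zero_lt_succ 2) hm⟩ = m)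
    (hmod : ∀ i : Fin m, g i % m = (i : ℕ)) (hmin : IsMinGen g)
    (a' : ℕ) (i : ZMod m) (hi0 : i ≠ 0) (ha3 : 3 ≤ a')
    (hieq : GG hm g i + GG hm g (-i) = a' * m)
    (s x : ZMod m) (hx : x ≠ 0) (hsx : s - x ≠ 0)
    (N : ℕ) (hN : N = GG hm g x + GG hm g (s - x))
    (hbig : (if s = 0 then (a' + 1) * m else GG hm g s + a' * m) ≤ N) :
    ∃ u v : ZMod m, u ≠ 0 ∧ v ≠ 0 ∧ u + v = s ∧
      ∃ q, 1 ≤ q ∧ q ≤ a' - 2 ∧ GG hm g u + GG hm g v + q * m = N := by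
  haveI : NeZero m := ⟨by omega⟩
  haveI : Fact (Nat.Prime m) := ⟨hp⟩
  classical
  set u : ℕ → ZMod m := fun k => x - (k : ZMod m) * i with hu
  have hQex : ∃ k, u k = 0 ∨ u k = s ∨ GG hm g (u k) + GG hm g (s - u k) < N := by
    refine ⟨(x * i⁻¹).val, Or.inl ?_⟩
    show x - ((x * i⁻¹).val : ZMod m) * i = 0
    have hval : (((x * i⁻¹).val : ℕ) : ZMod m) = x * i⁻¹ := by
      simp [ZMod.natCast_val, ZMod.cast_id]
    rw [hval, mul_assoc, inv_mul_cancel₀ hi0, mul_one, sub_self]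
  set K := Nat.find hQex with hK
  have hQK := Nat.find_spec hQex
  rw [← hK] at hQK
  have hQlt : ∀ k, k < K → ¬(u k = 0 ∨ u k = s ∨ GG hm g (u k) + GG hm g (s - u k) < N) :=
    fun k hk => Nat.find_min hQex hk
  have hu0 : u 0 = x := by show x - ((0 : ℕ) : ZMod m) * i = x; push_cast; ring
  have hK1 : 1 ≤ K := by
    rcases Nat.eq_zero_or_pos K with h | h
    · exfalso
      rw [h] at hQK
      rw [hu0] at hQK
      rcases hQK with h' | h' | h'
      · exact hx h'
      · exact hsx (by rw [h', sub_self])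
      · rw [← hN] at h'; omega
    · exact h
  have hprev := hQlt (K - 1) (by omega)
  push_neg at hprev
  obtain ⟨hp0, hps, hpD⟩ := hprev
  have hstep : u (K - 1) = u K + i := by
    show x - ((K - 1 : ℕ) : ZMod m) * i = x - (K : ZMod m) * i + i
    rw [Nat.cast_sub hK1]
    push_cast
    ring
  -- endpoint case A : u K = 0
  by_cases hA : u K = 0
  · exfalso
    have hKi : u (K - 1) = i := by rw [hstep, hA, zero_add]
    rw [hKi] at hps hpD
    by_cases hs0 : s = 0
    · rw [if_pos hs0] at hbig
      rw [hs0, zero_sub] at hpD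
      have : (a' + 1) * m = a' * m + m := by ring
      omega
    · have hsi : s - i ≠ 0 := sub_ne_zero.mpr (Ne.symm hps)
      obtain ⟨t, ht1, htEq⟩ := lemT hm g hg0 hmod hmin hs0 (neg_ne_zero.mpr hi0)
        (show s + -i ≠ 0 by rwa [← sub_eq_add_neg])
      rw [← sub_eq_add_neg] at htEq
      rw [if_neg hs0] at hbig
      have hmt : m ≤ t * m := Nat.le_mul_of_pos_left m (by omega)
      omega
  -- endpoint case B : u K = s
  by_cases hB : u K = s
  · exfalso
    have hs0 : s ≠ 0 := by rw [← hB]; exact hA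
    have hKsi : u (K - 1) = s + i := by rw [hstep, hB]
    rw [hKsi] at hps hp0 hpD
    have harg : s - (s + i) = -i := by ring
    rw [harg] at hpD
    obtain ⟨t, ht1, htEq⟩ := lemT hm g hg0 hmod hmin hs0 hi0 hp0
    simp only [if_neg hs0] at hbig
    have hmt : m ≤ t * m := Nat.le_mul_of_pos_left m (by omega)
    omega
  -- witness case
  have hD : GG hm g (u K) + GG hm g (s - u K) < N := by
    rcases hQK with h | h | h
    · exact absurd h hA
    · exact absurd h hB
    · exact h
  have hsuK : s - u K ≠ 0 := sub_ne_zero.mpr (Ne.symm hB)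
  obtain ⟨t₁, ht₁1, ht₁⟩ := lemT hm g hg0 hmod hmin hA hi0
    (show u K + i ≠ 0 by rw [← hstep]; exact hp0)
  obtain ⟨t₂, ht₂1, ht₂⟩ := lemT hm g hg0 hmod hmin hsuK (neg_ne_zero.mpr hi0)
    (show s - u K + -i ≠ 0 by
      have : s - u K + -i = s - u (K - 1) := by rw [hstep]; ring
      rw [this]
      exact sub_ne_zero.mpr (Ne.symm hps))
  have harg1 : u K + i = u (K - 1) := hstep.symm
  have harg2 : s - u K + -i = s - u (K - 1) := by rw [hstep]; ring
  rw [harg1] at ht₁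
  rw [harg2] at ht₂
  -- D (u (K-1)) + t₁ m + t₂ m = D (u K) + a' m
  have hDrel : GG hm g (u (K - 1)) + GG hm g (s - u (K - 1)) + t₁ * m + t₂ * m =
      GG hm g (u K) + GG hm g (s - u K) + a' * m := by omega
  have hmt₁ : m ≤ t₁ * m := Nat.le_mul_of_pos_left m (by omega)
  have hmt₂ : m ≤ t₂ * m := Nat.le_mul_of_pos_left m (by omega)
  -- congruence: m ∣ N - D (u K)
  have hcong : (N : ZMod m) = ((GG hm g (u K) + GG hm g (s - u K) : ℕ) : ZMod m) := by
    rw [hN]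
    push_cast
    rw [Gcast hm g hmod, Gcast hm g hmod, Gcast hm g hmod, Gcast hm g hmod]
    ring
  have hdvd : m ∣ N - (GG hm g (u K) + GG hm g (s - u K)) :=
    (Nat.modEq_iff_dvd' (le_of_lt hD)).mp
      ((ZMod.natCast_eq_natCast_iff _ _ _).mp hcong.symm)
  obtain ⟨q, hq⟩ := hdvd
  have hq1 : 1 ≤ q := by
    rcases Nat.eq_zero_or_pos q with h | h
    · exfalso; rw [h, Nat.mul_zero] at hq; omega
    · exact h
  set b := a' - 2 with hb
  have hab : a' = b + 2 := by omega
  have hqb : q ≤ b := by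
    have hcomm : m * b = b * m := mul_comm m b
    have h1 : m * q ≤ m * b := by
      have hexp : a' * m = b * m + 2 * m := by rw [hab]; ring
      omega
    exact Nat.le_of_mul_le_mul_left h1 (by omega)
  refine ⟨u K, s - u K, hA, hsuK, add_sub_cancel _ _, q, hq1, hqb, ?_⟩
  have : m * q = q * m := mul_comm m q
  omega

end Aux5

end LengthDensity

namespace LengthDensity

section Aux6

variable {m : ℕ}

lemma gpos (hm : 3 ≤ m) (g : Fin m → ℕ) (hg0 : g ⟨0, Nat.lt_of_lt_of_le (Nat.zero_lt_succ 2) hm⟩ = m)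
    (hbig : ∀ i : Fin m, (i : ℕ) ≠ 0 → m < g i) (j : Fin m) : m ≤ g j := by
  by_cases h : j = F0 hm
  · rw [h]; exact le_of_eq hg0.symm
  · exact le_of_lt (hbig j (fun hv => h (Fin.ext hv)))

lemma len_zero_of_vval_zero (hm : 3 ≤ m) (g : Fin m → ℕ) (hg0 : g ⟨0, Nat.lt_of_lt_of_le (Nat.zero_lt_succ 2) hm⟩ = m)
    (hbig : ∀ i : Fin m, (i : ℕ) ≠ 0 → m < g i) {z : Fin m → ℕ}
    (h : vval g z = 0) : len z = 0 := by
  apply Finset.sum_eq_zero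
  intro j _
  have hj := Finset.sum_eq_zero_iff.mp h j (Finset.mem_univ j)
  have := gpos hm g hg0 hbig j
  exact Nat.mul_eq_zero.mp hj |>.resolve_right (by omega)

/-- The main gap bound: consecutive lengths differ by at most `a' - 2`. -/
lemma part3 (hm : 3 ≤ m) (hp : Nat.Prime m) (g : Fin m → ℕ)
    (hg0 : g ⟨0, Nat.lt_of_lt_of_le (Nat.zero_lt_succ 2) hm⟩ = m)
    (hmod : ∀ i : Fin m, g i % m = (i : ℕ))
    (hbig : ∀ i : Fin m, (i : ℕ) ≠ 0 → m < g i) (hmin : IsMinGen g)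
    (a' : ℕ) (i : ZMod m) (hi0 : i ≠ 0) (ha3 : 3 ≤ a')
    (hieq : GG hm g i + GG hm g (-i) = a' * m)
    (hpair : ∀ ρ : ZMod m, ρ ≠ 0 → a' * m ≤ GG hm g ρ + GG hm g (-ρ)) :
    ∀ n ℓ ℓ', ℓ ∈ lengthSet g n → ℓ' ∈ lengthSet g n → ℓ < ℓ' →
      (∀ c ∈ lengthSet g n, ¬(ℓ < c ∧ c < ℓ')) → ℓ' - ℓ ≤ a' - 2 := by
  intro n
  induction n using Nat.strong_induction_on with
  | _ n IHn =>
  intro ℓ ℓ' hℓ hℓ' hlt hcons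
  by_contra hbad
  have hgap : ℓ + (a' - 1) ≤ ℓ' := by omega
  have memlen : ∀ {n₀ : ℕ} (z : Fin m → ℕ), vval g z = n₀ → len z ∈ lengthSet g n₀ :=
    fun z hz => ⟨z, hz, rfl⟩
  -- realizers
  obtain ⟨zl, hzlf, hzll0⟩ := hℓ
  obtain ⟨zh, hzhf, hzhl0⟩ := hℓ'
  have vl : vval g zl = n := hzlf
  have vh : vval g zh = n := hzhf
  have hzll : len zl = ℓ := hzll0
  have hzhl : len zh = ℓ' := hzhl0
  clear hzll0 hzhl0 hzlf hzhf
  -- n ≥ 1 and ℓ ≥ 1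
  have hn1 : 1 ≤ n := by
    rcases Nat.eq_zero_or_pos n with h | h
    · exfalso
      have := len_zero_of_vval_zero hm g hg0 hbig (h ▸ vh)
      omega
    · exact h
  have hℓ1 : 1 ≤ ℓ := by
    rcases Nat.eq_zero_or_pos ℓ with h | h
    · exfalso
      have hz0 : vval g zl = 0 := by
        apply Finset.sum_eq_zero
        intro j _
        rw [zero_of_len_zero (by omega : len zl = 0) j, zero_mul]
      omega
    · exact h
  -- the interval-filling lemma
  have FILL : ∀ n', n' < n → ∀ d lam₁ lam₂, lam₁ ∈ lengthSet g n' → lam₂ ∈ lengthSet g n' →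
      lam₂ - lam₁ = d → lam₁ + 1 ≤ ℓ → ℓ' ≤ lam₂ + 1 →
      ∃ lam ∈ lengthSet g n', ℓ ≤ lam ∧ lam + 2 ≤ ℓ' := by
    intro n' hn' d
    induction d using Nat.strong_induction_on with
    | _ d IHd =>
    intro lam₁ lam₂ h₁ h₂ hd hup hdown
    have hlamlt : lam₁ < lam₂ := by omega
    have hnotcons : ¬ (∀ c ∈ lengthSet g n', ¬(lam₁ < c ∧ c < lam₂)) := by
      intro hc
      have := IHn n' hn' lam₁ lam₂ h₁ h₂ hlamlt hc
      omega
    push_neg at hnotcons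
    obtain ⟨c, hcmem, hc1, hc2⟩ := hnotcons
    by_cases hcu : c + 1 ≤ ℓ
    · exact IHd (lam₂ - c) (by omega) c lam₂ hcmem h₂ rfl hcu hdown
    · by_cases hcd : ℓ' ≤ c + 1
      · exact IHd (c - lam₁) (by omega) lam₁ c h₁ hcmem rfl hup hcd
      · exact ⟨c, hcmem, by omega, by omega⟩
  -- Fact D : low and high factorizations have disjoint support
  have FactD : ∀ y y', vval g y = n → vval g y' = n → len y ≤ ℓ → ℓ' ≤ len y' →
      ∀ j, ¬(0 < y j ∧ 0 < y' j) := by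
    rintro y y' hyv hy'v hyl hy'l j ⟨hyj, hy'j⟩
    obtain ⟨w, hyw, _, _⟩ := exists_decomp hyj
    obtain ⟨w', hy'w, _, _⟩ := exists_decomp hy'j
    have hvww : vval g y = 1 * g j + vval g w := by rw [hyw, vval_add, vval_sing]
    have hvww' : vval g y' = 1 * g j + vval g w' := by rw [hy'w, vval_add, vval_sing]
    have hlww : len y = 1 + len w := by rw [hyw, len_add, len_sing]
    have hlww' : len y' = 1 + len w' := by rw [hy'w, len_add, len_sing]
    have hgj := gpos hm g hg0 hbig j
    have hwmem : len w ∈ lengthSet g (vval g w) := memlen w rfl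
    have hw'mem : len w' ∈ lengthSet g (vval g w) := by
      have : vval g w' = vval g w := by omega
      exact this ▸ memlen w' rfl
    obtain ⟨lam, hlmem, hl1, hl2⟩ := FILL (vval g w) (by omega) (len w' - len w)
      (len w) (len w') hwmem hw'mem rfl (by omega) (by omega)
    obtain ⟨uz, huzf, huzl⟩ := hlmem
    replace huzf : vval g uz = vval g w := huzf
    replace huzl : len uz = lam := huzl
    have hz''v : vval g (sing j 1 + uz) = n := by
      rw [vval_add, vval_sing, huzf]; omega
    have hz''l : len (sing j 1 + uz) = lam + 1 := by
      rw [len_add, len_sing, huzl]; omega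
    have hmem2 : lam + 1 ∈ lengthSet g n := by
      rw [← hz''l]; exact memlen _ hz''v
    have := hcons (lam + 1) hmem2
    omega
  -- Step A : all low factorizations are pure
  have StepA : ∀ y, vval g y = n → len y ≤ ℓ → y (F0 hm) = 0 := by
    intro y hyv hyl
    by_contra hy0
    have hy0' : 0 < y (F0 hm) := by omega
    have hzhF : zh (F0 hm) = 0 := by
      rcases Nat.eq_zero_or_pos (zh (F0 hm)) with h | h
      · exact h
      · exact absurd ⟨hy0', h⟩ (FactD y zh hyv vh hyl (by omega) (F0 hm))
    obtain ⟨p, q, w, hzw, hpF, hqF, hpq⟩ := sublemZ hm hp hzhF (by omega)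
    have hppos : pii p ≠ 0 := fun h => hpF ((pii_eq_zero_iff hm p).mp h)
    have hqpos : pii q ≠ 0 := fun h => hqF ((pii_eq_zero_iff hm q).mp h)
    obtain ⟨t, ht1, htEq⟩ := lemT hm g hg0 hmod hmin hppos hqpos hpq
    rw [GG_pii, GG_pii] at htEq
    have hrF : iot hm (pii p + pii q) ≠ F0 hm := by
      rw [← iot_zero hm]; exact fun h => hpq (iot_inj hm h)
    set z'' := sing (iot hm (pii p + pii q)) 1 + (sing (F0 hm) t + w) with hz''
    have hz''v : vval g z'' = n := by
      rw [hz'', vval_add, vval_add, vval_sing, vval_sing, one_mul,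
        show g (F0 hm) = m from hg0]
      have h1 : g (iot hm (pii p + pii q)) = GG hm g (pii p + pii q) := rfl
      have h3 : vval g zh = 1 * g p + (1 * g q + vval g w) := by
        rw [hzw, vval_add, vval_add, vval_sing, vval_sing]
      omega
    have hz''l : ℓ' ≤ len z'' := by
      rw [hz'', len_add, len_add, len_sing, len_sing]
      have h3 : len zh = 1 + (1 + len w) := by
        rw [hzw, len_add, len_add, len_sing, len_sing]
      omega
    have hz''0 : 0 < z'' (F0 hm) := by
      rw [hz'']
      simp [sing, Pi.add_apply, Ne.symm hrF]
      omega
    exact absurd ⟨hy0', hz''0⟩ (FactD y z'' hyv hz''v hyl hz''l (F0 hm))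
  have hzlF : zl (F0 hm) = 0 := StepA zl vl (by omega)
  -- ℓ ≤ 2
  have hl2 : ℓ ≤ 2 := by
    by_contra h3
    obtain ⟨p, q, w, hzw, hpF, hqF, hpq⟩ := sublemZ hm hp hzlF (by omega)
    have hppos : pii p ≠ 0 := fun h => hpF ((pii_eq_zero_iff hm p).mp h)
    have hqpos : pii q ≠ 0 := fun h => hqF ((pii_eq_zero_iff hm q).mp h)
    obtain ⟨t, ht1, htEq⟩ := lemT hm g hg0 hmod hmin hppos hqpos hpq
    rw [GG_pii, GG_pii] at htEq
    have hrF : iot hm (pii p + pii q) ≠ F0 hm := by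
      rw [← iot_zero hm]; exact fun h => hpq (iot_inj hm h)
    set z'' := sing (iot hm (pii p + pii q)) 1 + (sing (F0 hm) t + w) with hz''
    have hzlval : vval g zl = 1 * g p + (1 * g q + vval g w) := by
      rw [hzw, vval_add, vval_add, vval_sing, vval_sing]
    have hzllen : len zl = 1 + (1 + len w) := by
      rw [hzw, len_add, len_add, len_sing, len_sing]
    have hz''v : vval g z'' = n := by
      rw [hz'', vval_add, vval_add, vval_sing, vval_sing, one_mul,
        show g (F0 hm) = m from hg0]
      have h1 : g (iot hm (pii p + pii q)) = GG hm g (pii p + pii q) := rfl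
      omega
    have hz''len : len z'' = ℓ + t - 1 := by
      rw [hz'', len_add, len_add, len_sing, len_sing]
      omega
    have hz''0 : 0 < z'' (F0 hm) := by
      rw [hz'']
      simp [sing, Pi.add_apply, Ne.symm hrF]
      omega
    rcases Nat.lt_or_ge t 2 with ht2 | ht2
    · -- t = 1 : z'' is low but not pure
      have : len z'' ≤ ℓ := by omega
      have := StepA z'' hz''v this
      omega
    · -- t ≥ 2 : z'' is high but shares support with zl
      have hmem := memlen z'' hz''v
      have hnotin := hcons (len z'') hmem
      have hz''h : ℓ' ≤ len z'' := by omega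
      have hwpos : 0 < len w := by omega
      obtain ⟨j, hj⟩ := exists_pos_of_len_pos hwpos
      have hzlj : 0 < zl j := by
        have := congrFun hzw j
        rw [this, Pi.add_apply, Pi.add_apply]
        omega
      have hz''j : 0 < z'' j := by
        rw [hz'', Pi.add_apply, Pi.add_apply]
        omega
      exact absurd ⟨hzlj, hz''j⟩ (FactD zl z'' vl hz''v (by omega) hz''h j)
  -- now ℓ = 1 or ℓ = 2
  rcases show ℓ = 1 ∨ ℓ = 2 by omega with h1 | h2
  · -- ℓ = 1 : n is a generator
    obtain ⟨p, w, hpF, hwF, hzw, hlen, _, _⟩ := decomp_one hm hzlF (by omega)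
    have hw0 : len w = 0 := by omega
    have hnv : n = g p := by
      rw [← vl, hzw, vval_add, vval_sing, one_mul, vval_zero g hw0, add_zero]
    have hzlp : 0 < zl p := by
      have := congrFun hzw p
      rw [this, Pi.add_apply]
      simp [sing]
    have hzhp : zh p = 0 := by
      rcases Nat.eq_zero_or_pos (zh p) with h | h
      · exact h
      · exact absurd ⟨hzlp, h⟩ (FactD zl zh vl vh (by omega) (by omega) p)
    exact hmin p ⟨zh, hzhp, by show vval g zh = g p; omega⟩
  · -- ℓ = 2 : n is a sum of two generators
    obtain ⟨p, w, hpF, hwF, hzw, hlen, _, _⟩ := decomp_one hm hzlF (by omega)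
    obtain ⟨q, w', hqF, hw'F, hww', hlen', _, _⟩ := decomp_one hm hwF (by omega)
    have hw'0 : len w' = 0 := by omega
    have hnv : n = g p + g q := by
      rw [← vl, hzw, hww', vval_add, vval_add, vval_sing, vval_sing, one_mul, one_mul,
        vval_zero g hw'0, add_zero]
    have hppos : pii p ≠ 0 := fun h => hpF ((pii_eq_zero_iff hm p).mp h)
    have hqpos : pii q ≠ 0 := fun h => hqF ((pii_eq_zero_iff hm q).mp h)
    have hgp : g p = GG hm g (pii p) := (GG_pii hm g p).symm
    have hgq : g q = GG hm g (pii q) := (GG_pii hm g q).symm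
    by_cases hs0 : pii p + pii q = 0
    · -- Case I : n is a multiple of m
      have hqneg : pii q = -pii p := by linear_combination hs0
      have hnval : n = GG hm g (pii p) + GG hm g (-(pii p)) := by
        rw [hnv, hgp, hgq, hqneg]
      obtain ⟨c, hc3, hcEq⟩ := pair_mul hm g hmod hbig hppos
      have hnc : n = c * m := by rw [hnval, hcEq]
      have hca : a' ≤ c := by
        have h1 : a' * m ≤ c * m := by rw [← hcEq]; exact hpair _ hppos
        exact Nat.le_of_mul_le_mul_right h1 (by omega)
      by_cases hce : c = a'
      · -- length a' lies in the gap
        have hz''v : vval g (sing (F0 hm) c) = n := by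
          rw [vval_sing, show g (F0 hm) = m from hg0]
          omega
        have hz''l : len (sing (F0 hm) c) = c := len_sing _ _
        have := hcons c (hz''l ▸ memlen _ hz''v)
        omega
      · -- c > a' : use the walk lemma with s = 0
        obtain ⟨u, v, hu0, hv0, huv, q', hq'1, hq'2, hq'val⟩ :=
          walk hm hp g hg0 hmod hmin a' i hi0 ha3 hieq 0 (pii p) hppos
            (by rw [zero_sub]; exact neg_ne_zero.mpr hppos) n
            (by rw [zero_sub]; exact hnval)
            (by
              rw [if_pos rfl, hnc]
              exact Nat.mul_le_mul_right m (by omega))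
        set z'' := sing (iot hm u) 1 + (sing (iot hm v) 1 + sing (F0 hm) q') with hz''
        have hz''v : vval g z'' = n := by
          rw [hz'', vval_add, vval_add, vval_sing, vval_sing, vval_sing, one_mul, one_mul,
            show g (F0 hm) = m from hg0]
          have h1 : g (iot hm u) = GG hm g u := rfl
          have h2 : g (iot hm v) = GG hm g v := rfl
          omega
        have hz''l : len z'' = 2 + q' := by
          rw [hz'', len_add, len_add, len_sing, len_sing, len_sing]; omega
        have := hcons (2 + q') (hz''l ▸ memlen _ hz''v)
        omega
    · -- Case II : n ≡ g_(p+q)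
      obtain ⟨t₀, ht₀1, ht₀⟩ := lemT hm g hg0 hmod hmin hppos hqpos hs0
      rw [GG_pii, GG_pii] at ht₀
      have hnt : n = GG hm g (pii p + pii q) + t₀ * m := by omega
      have hrF : iot hm (pii p + pii q) ≠ F0 hm := by
        rw [← iot_zero hm]; exact fun h => hs0 (iot_inj hm h)
      rcases show t₀ = 1 ∨ (2 ≤ t₀ ∧ t₀ ≤ a' - 1) ∨ a' ≤ t₀ by omega with ht | ht | ht
      · -- t₀ = 1 : impure low factorization, contradiction with Step A
        rw [ht] at hnt
        set z'' := sing (iot hm (pii p + pii q)) 1 + sing (F0 hm) 1 with hz''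
        have hz''v : vval g z'' = n := by
          rw [hz'', vval_add, vval_sing, vval_sing, one_mul, one_mul,
            show g (F0 hm) = m from hg0]
          have h1 : g (iot hm (pii p + pii q)) = GG hm g (pii p + pii q) := rfl
          omega
        have hz''len : len z'' = 2 := by rw [hz'', len_add, len_sing, len_sing]
        have := StepA z'' hz''v (by omega)
        rw [hz''] at this
        simp [sing, Pi.add_apply, Ne.symm hrF] at this
      · -- 2 ≤ t₀ ≤ a'-1 : length 1 + t₀ is in the gap
        set z'' := sing (iot hm (pii p + pii q)) 1 + sing (F0 hm) t₀ with hz''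
        have hz''v : vval g z'' = n := by
          rw [hz'', vval_add, vval_sing, vval_sing, one_mul,
            show g (F0 hm) = m from hg0]
          have h1 : g (iot hm (pii p + pii q)) = GG hm g (pii p + pii q) := rfl
          omega
        have hz''len : len z'' = 1 + t₀ := by rw [hz'', len_add, len_sing, len_sing]
        have := hcons (1 + t₀) (hz''len ▸ memlen _ hz''v)
        omega
      · -- t₀ ≥ a' : use the walk lemma
        obtain ⟨u, v, hu0, hv0, huv, q', hq'1, hq'2, hq'val⟩ :=
          walk hm hp g hg0 hmod hmin a' i hi0 ha3 hieq (pii p + pii q) (pii p) hppos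
            (by rw [add_sub_cancel_left]; exact hqpos) n
            (by rw [add_sub_cancel_left, ← hgp, ← hgq]; exact hnv)
            (by
              rw [if_neg hs0, hnt]
              have : a' * m ≤ t₀ * m := Nat.mul_le_mul_right m ht
              omega)
        set z'' := sing (iot hm u) 1 + (sing (iot hm v) 1 + sing (F0 hm) q') with hz''
        have hz''v : vval g z'' = n := by
          rw [hz'', vval_add, vval_add, vval_sing, vval_sing, vval_sing, one_mul, one_mul,
            show g (F0 hm) = m from hg0]
          have h1 : g (iot hm u) = GG hm g u := rfl
          have h2 : g (iot hm v) = GG hm g v := rfl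
          omega
        have hz''l : len z'' = 2 + q' := by
          rw [hz'', len_add, len_add, len_sing, len_sing, len_sing]; omega
        have := hcons (2 + q') (hz''l ▸ memlen _ hz''v)
        omega

end Aux6

end LengthDensity

namespace LengthDensity

section Aux7

lemma fingap : ∀ (k : ℕ) (F : Finset ℕ) (d : ℕ) (hne : F.Nonempty), F.card = k →
    (∀ x ∈ F, ∀ y ∈ F, x < y → (∀ c ∈ F, ¬(x < c ∧ c < y)) → y - x ≤ d) →
    F.max' hne - F.min' hne ≤ (k - 1) * d := by
  intro k
  induction k with
  | zero =>
    intro F d hne hcard _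
    exfalso
    have := Finset.card_pos.mpr hne
    omega
  | succ k IH =>
    intro F d hne hcard hgap
    rcases Nat.eq_zero_or_pos k with hk | hk
    · obtain ⟨x, hx⟩ := Finset.card_eq_one.mp (by omega : F.card = 1)
      subst hk
      have h1 : F.max' hne = x := by simp [hx]
      have h2 : F.min' hne = x := by simp [hx]
      simp [h1, h2]
    · have hlt : F.min' hne < F.max' hne := Finset.min'_lt_max'_of_card F (by omega)
      set M := F.max' hne with hM
      set F' := F.erase M with hF'
      have hne' : F'.Nonempty :=
        ⟨F.min' hne, Finset.mem_erase.mpr ⟨ne_of_lt hlt, F.min'_mem hne⟩⟩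
      have hcard' : F'.card = k := by
        rw [hF', Finset.card_erase_of_mem (F.max'_mem hne)]
        omega
      have hsub : F' ⊆ F := Finset.erase_subset _ _
      have hgap' : ∀ x ∈ F', ∀ y ∈ F', x < y → (∀ c ∈ F', ¬(x < c ∧ c < y)) → y - x ≤ d := by
        intro x hx y hy hxy hcons
        apply hgap x (hsub hx) y (hsub hy) hxy
        rintro c hc ⟨h1, h2⟩
        by_cases hcM : c = M
        · have : y ≤ M := Finset.le_max' F y (hsub hy)
          omega
        · exact hcons c (Finset.mem_erase.mpr ⟨hcM, hc⟩) ⟨h1, h2⟩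
      have IH' := IH F' d hne' hcard' hgap'
      have hmineq : F'.min' hne' = F.min' hne := by
        apply le_antisymm
        · exact Finset.min'_le F' _ (Finset.mem_erase.mpr ⟨ne_of_lt hlt, F.min'_mem hne⟩)
        · exact Finset.le_min' _ _ _ fun y hy => Finset.min'_le F y (hsub hy)
      have hltM : F'.max' hne' < M := by
        have hmem : F'.max' hne' ∈ F' := Finset.max'_mem _ _
        have h1 : F'.max' hne' ≤ M := Finset.le_max' F _ (hsub hmem)
        have h2 : F'.max' hne' ≠ M := (Finset.mem_erase.mp hmem).1
        omega
      have hcons2 : ∀ c ∈ F, ¬(F'.max' hne' < c ∧ c < M) := by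
        rintro c hc ⟨h1, h2⟩
        have hcM : c ≠ M := by omega
        have hcF' : c ∈ F' := Finset.mem_erase.mpr ⟨hcM, hc⟩
        have := Finset.le_max' F' c hcF'
        omega
      have hstep := hgap (F'.max' hne') (hsub (Finset.max'_mem _ _)) M (F.max'_mem hne)
        hltM hcons2
      have hmul : (k + 1 - 1) * d = (k - 1) * d + d := by
        have : k + 1 - 1 = (k - 1) + 1 := by omega
        rw [this, Nat.succ_mul]
      omega

end Aux7

end LengthDensity

namespace LengthDensity

theorem stmt13 (m : ℕ) (hm : 3 ≤ m) (hp : Nat.Prime m) (g : Fin m → ℕ)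
    (hg0 : g ⟨0, by omega⟩ = m)
    (hmod : ∀ i : Fin m, g i % m = (i : ℕ))
    (hbig : ∀ i : Fin m, (i : ℕ) ≠ 0 → m < g i)
    (hmin : IsMinGen g)
    (a : ℕ) (ha : IsBetti g (a * m))
    (hamin : ∀ a' : ℕ, IsBetti g (a' * m) → a ≤ a') :
    Bland g ∧ sSup (Delta g) = a - 2 := by
  haveI : NeZero m := ⟨by omega⟩
  obtain ⟨a', i, hi0, ha3, hieq, hpair⟩ := exists_minpair hm g hmod hbig
  obtain ⟨hBetti, hLS⟩ := betti_part hm hp g hg0 hmod hmin a' i hi0 ha3 hieq hpair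
  have haa' : a = a' := by
    have h1 : a ≤ a' := hamin a' hBetti
    by_contra hne
    have hlt : a * m < a' * m := by
      have h4 : (a + 1) * m ≤ a' * m := Nat.mul_le_mul_right m (by omega)
      have h5 : (a + 1) * m = a * m + m := by ring
      omega
    obtain ⟨z, hz, z', hz', hnot⟩ := ha
    have hdvd : m ∣ a * m := ⟨a, mul_comm a m⟩
    have e1 := facs_small hm hp g hg0 hmod hmin a' hpair hdvd hlt hz
    have e2 := facs_small hm hp g hg0 hmod hmin a' hpair hdvd hlt hz'
    apply hnot
    rw [e1, e2]
  subst haa'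
  -- finiteness of length sets
  have hfin : ∀ n0, (lengthSet g n0).Finite := by
    intro n0
    apply Set.Finite.subset (Set.finite_Iic n0)
    rintro lam ⟨z, hzf, hzl⟩
    have hzv : vval g z = n0 := hzf
    have hzl' : len z = lam := hzl
    clear hzf hzl
    have hlen : len z ≤ vval g z := by
      apply Finset.sum_le_sum
      intro j _
      exact Nat.le_mul_of_pos_right (z j) (by have := gpos hm g hg0 hbig j; omega)
    simp only [Set.mem_Iic]
    omega
  have P3 := part3 hm hp g hg0 hmod hbig hmin a i hi0 ha3 hieq hpair
  -- the supremum of the Delta set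
  have hmemD : a - 2 ∈ Delta g := by
    apply Set.mem_iUnion.mpr
    refine ⟨a * m, ?_⟩
    show a - 2 ∈ deltaOf (lengthSet g (a * m))
    rw [hLS]
    refine ⟨2, by simp, a, by simp, by omega, ?_, rfl⟩
    rintro c hc ⟨hc1, hc2⟩
    simp only [Set.mem_insert_iff, Set.mem_singleton_iff] at hc
    omega
  have hubD : ∀ d ∈ Delta g, d ≤ a - 2 := by
    intro d hd
    obtain ⟨n0, hn0⟩ := Set.mem_iUnion.mp hd
    obtain ⟨x, hx, y, hy, hxy, hcons, hdeq⟩ := hn0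
    have := P3 n0 x y hx hy hxy hcons
    omega
  have hSupD : sSup (Delta g) = a - 2 := by
    apply le_antisymm
    · exact csSup_le ⟨a - 2, hmemD⟩ hubD
    · exact le_csSup ⟨a - 2, fun d hd => hubD d hd⟩ hmemD
  -- facts about the length set of a*m
  have hncard : (lengthSet g (a * m)).ncard = 2 := by
    rw [hLS]; exact Set.ncard_pair (by omega : (2:ℕ) ≠ a)
  have hSup : sSup (lengthSet g (a * m)) = a := by
    rw [hLS, csSup_pair]; exact sup_eq_right.mpr (by omega)
  have hInf : sInf (lengthSet g (a * m)) = 2 := by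
    rw [hLS, csInf_pair]; exact inf_eq_left.mpr (by omega)
  have hacast : (0:ℝ) < (a : ℝ) - 2 := by
    have : (3:ℝ) ≤ (a:ℝ) := by exact_mod_cast ha3
    linarith
  have hLDam : LD g (a * m) = 1 / ((a:ℝ) - 2) := by
    unfold LD
    rw [hncard, hSup, hInf]
    norm_num
  -- lower bound for LD
  have hlow : ∀ n0, 2 ≤ (lengthSet g n0).ncard → 1 / ((a:ℝ) - 2) ≤ LD g n0 := by
    intro n0 h2
    have hfinL := hfin n0
    set F := hfinL.toFinset with hF
    have hcardF : F.card = (lengthSet g n0).ncard :=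
      (Set.ncard_eq_toFinset_card (lengthSet g n0) hfinL).symm
    have hne : F.Nonempty := Finset.card_pos.mp (by omega)
    have hminmax : F.min' hne < F.max' hne := Finset.min'_lt_max'_of_card F (by omega)
    have hSupL : sSup (lengthSet g n0) = F.max' hne := by
      apply le_antisymm
      · apply csSup_le ⟨F.max' hne, (Set.Finite.mem_toFinset hfinL).mp (F.max'_mem hne)⟩
        intro x hx
        exact Finset.le_max' F x ((Set.Finite.mem_toFinset hfinL).mpr hx)
      · exact le_csSup hfinL.bddAbove ((Set.Finite.mem_toFinset hfinL).mp (F.max'_mem hne))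
    have hInfL : sInf (lengthSet g n0) = F.min' hne := by
      apply le_antisymm
      · exact csInf_le (OrderBot.bddBelow _) ((Set.Finite.mem_toFinset hfinL).mp (F.min'_mem hne))
      · apply le_csInf ⟨F.max' hne, (Set.Finite.mem_toFinset hfinL).mp (F.max'_mem hne)⟩
        intro x hx
        exact Finset.min'_le F x ((Set.Finite.mem_toFinset hfinL).mpr hx)
    have hgapF : ∀ x ∈ F, ∀ y ∈ F, x < y → (∀ c ∈ F, ¬(x < c ∧ c < y)) → y - x ≤ a - 2 := by
      intro x hx y hy hxy hcons
      apply P3 n0 x y ((Set.Finite.mem_toFinset hfinL).mp hx)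
        ((Set.Finite.mem_toFinset hfinL).mp hy) hxy
      intro c hc
      exact hcons c ((Set.Finite.mem_toFinset hfinL).mpr hc)
    have hbound := fingap F.card F (a - 2) hne rfl hgapF
    unfold LD
    rw [hSupL, hInfL]
    have hMpos : (0:ℝ) < (F.max' hne : ℝ) - (F.min' hne : ℝ) := by
      have : ((F.min' hne : ℕ) : ℝ) < ((F.max' hne : ℕ) : ℝ) := by exact_mod_cast hminmax
      linarith
    rw [div_le_div_iff₀ hacast hMpos]
    have hle : ((F.max' hne - F.min' hne : ℕ) : ℝ) ≤ (((F.card - 1) * (a - 2) : ℕ) : ℝ) := by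
      exact_mod_cast hbound
    have e1 : ((F.max' hne - F.min' hne : ℕ) : ℝ) = (F.max' hne : ℝ) - (F.min' hne : ℝ) :=
      Nat.cast_sub (le_of_lt hminmax)
    have e2 : (((F.card - 1) * (a - 2) : ℕ) : ℝ) = ((F.card : ℝ) - 1) * ((a:ℝ) - 2) := by
      rw [Nat.cast_mul, Nat.cast_sub (by omega : 1 ≤ F.card), Nat.cast_sub (by omega : 2 ≤ a)]
      norm_num
    rw [e1, e2] at hle
    have e3 : (F.card : ℝ) = ((lengthSet g n0).ncard : ℝ) := by exact_mod_cast hcardF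
    rw [e3] at hle
    linarith
  have hTmem : (1 / ((a:ℝ) - 2)) ∈ {x : ℝ | ∃ n : ℕ, 2 ≤ (lengthSet g n).ncard ∧ x = LD g n} :=
    ⟨a * m, by rw [hncard], hLDam.symm⟩
  have hTlb : ∀ x ∈ {x : ℝ | ∃ n : ℕ, 2 ≤ (lengthSet g n).ncard ∧ x = LD g n},
      1 / ((a:ℝ) - 2) ≤ x := by
    rintro x ⟨n0, hn0, rfl⟩
    exact hlow n0 hn0
  have hLDsgp : LDsgp g = 1 / ((a:ℝ) - 2) := by
    unfold LDsgp
    apply le_antisymm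
    · exact csInf_le ⟨1 / ((a:ℝ) - 2), fun x hx => hTlb x hx⟩ hTmem
    · exact le_csInf ⟨_, hTmem⟩ hTlb
  refine ⟨?_, hSupD⟩
  show LDsgp g = 1 / ((sSup (Delta g) : ℕ) : ℝ)
  rw [hSupD, hLDsgp]
  congr 1
  rw [Nat.cast_sub (by omega : 2 ≤ a)]
  norm_num

end LengthDensity
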